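/- Let T_{(X,Y)}(Z) = Σ_{i=1}^K x_i y_i† Z y_i x_i† be a separable completely positive operator on M(N,ℂ). Suppose T_{(X,Y)} is rank non-decreasing (rank(T(Z)) ≥ rank(Z) for all Z ⪰ 0). Then the intersection of the two geometric matroids defined by (x_i) and (y_i) has rank N; i.e., there exist indices i₁ < ⋯ < i_N such that {x_{i₁},…,x_{i_N}} and {y_{i₁},…,y_{i_N}} are each linearly independent. -/

import Mathlib

open Matrix
open scoped ComplexOrder

section Helpers
open Submodule Module Set

variable {V : Type*} [AddCommGroup V] [Module ℂ V] [FiniteDimensional ℂ V]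

lemma finrank_map_mkQ_add (W U : Submodule ℂ V) :
    finrank ℂ ↥(U.map W.mkQ) + finrank ℂ ↥W = finrank ℂ ↥(U ⊔ W) := by
  have h1 : U.map W.mkQ = (U ⊔ W).map W.mkQ := by
    rw [Submodule.map_sup, Submodule.mkQ_map_self, sup_bot_eq]
  set f : ↥(U ⊔ W) →ₗ[ℂ] V ⧸ W := W.mkQ ∘ₗ (U ⊔ W).subtype with hf
  have hrange : LinearMap.range f = (U ⊔ W).map W.mkQ := by
    rw [hf, LinearMap.range_comp, Submodule.range_subtype]
  have hker : finrank ℂ ↥(LinearMap.ker f) = finrank ℂ ↥W := by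
    rw [hf, LinearMap.ker_comp, Submodule.ker_mkQ]
    exact (Submodule.comapSubtypeEquivOfLe le_sup_right).finrank_eq
  have h2 := LinearMap.finrank_range_add_finrank_ker f
  rw [hrange, hker] at h2
  rw [h1, h2]

lemma finrank_span_quot (v : V) (hv : v ≠ 0) (s : Set V) :
    finrank ℂ ↥(span ℂ ((span ℂ {v}).mkQ '' s)) + 1 = finrank ℂ ↥(span ℂ (insert v s)) := by
  have h := finrank_map_mkQ_add (span ℂ {v}) (span ℂ s)
  rw [Submodule.map_span, finrank_span_singleton hv] at h
  rw [Set.insert_eq, Submodule.span_union, h, sup_comm]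

set_option maxHeartbeats 1000000 in
lemma linearIndependent_insert_of_quot {ι : Type*} {x : ι → V} {S : Set ι} {e : ι}
    (he : e ∉ S) (hxe : x e ≠ 0)
    (h : LinearIndependent ℂ ((fun i => (span ℂ {x e}).mkQ (x i)) ∘ (Subtype.val : S → ι))) :
    LinearIndependent ℂ (fun i : ↥(insert e S) => x i) := by
  refine (linearIndepOn_insert he).mpr ?_
  refine ⟨(h.of_comp ((span ℂ {x e}).mkQ) : _), ?_⟩
  intro hmem
  rw [Finsupp.mem_span_image_iff_linearCombination] at hmem
  obtain ⟨l, hl, hrepr⟩ := hmem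
  have h0 : Finsupp.linearCombination ℂ (⇑((span ℂ {x e}).mkQ) ∘ x) l = 0 := by
    have h1 := Finsupp.apply_linearCombination ℂ ((span ℂ {x e}).mkQ) x l
    rw [hrepr] at h1
    rw [← h1]
    exact (Submodule.Quotient.mk_eq_zero _).mpr (Submodule.mem_span_singleton_self _)
  have hl0 : l = 0 := (linearIndepOn_iff.mp (linearIndependent_comp_subtype_iff.mp h)) l hl h0
  rw [hl0] at hrepr
  simp at hrepr
  exact hxe hrepr.symm

lemma span_submod {ι : Type*} (x : ι → V) (A B : Set ι) :
    finrank ℂ ↥(span ℂ (x '' (A ∪ B))) + finrank ℂ ↥(span ℂ (x '' (A ∩ B)))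
      ≤ finrank ℂ ↥(span ℂ (x '' A)) + finrank ℂ ↥(span ℂ (x '' B)) := by
  have h1 : span ℂ (x '' (A ∪ B)) = span ℂ (x '' A) ⊔ span ℂ (x '' B) := by
    rw [Set.image_union, Submodule.span_union]
  have h2 : span ℂ (x '' (A ∩ B)) ≤ span ℂ (x '' A) ⊓ span ℂ (x '' B) :=
    le_inf (span_mono (Set.image_mono Set.inter_subset_left))
           (span_mono (Set.image_mono Set.inter_subset_right))
  have h3 := Submodule.finrank_sup_add_finrank_inf_eq (span ℂ (x '' A)) (span ℂ (x '' B))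
  have h4 := Submodule.finrank_mono h2
  rw [h1]
  omega

end Helpers

section Edmonds
open Submodule Module Set

lemma edmonds : ∀ (m : ℕ) {V₁ V₂ : Type*} [AddCommGroup V₁] [Module ℂ V₁]
    [FiniteDimensional ℂ V₁] [AddCommGroup V₂] [Module ℂ V₂] [FiniteDimensional ℂ V₂]
    {ι : Type*} [DecidableEq ι] (x : ι → V₁) (y : ι → V₂) (E : Finset ι) (n : ℕ),
    E.card = m →
    (∀ A : Finset ι, A ⊆ E →
        n ≤ finrank ℂ ↥(span ℂ (x '' ↑A)) + finrank ℂ ↥(span ℂ (y '' ↑(E \ A)))) →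
    ∃ S : Finset ι, S ⊆ E ∧ S.card = n ∧
      LinearIndependent ℂ (fun i : ↥(↑S : Set ι) => x i) ∧
      LinearIndependent ℂ (fun i : ↥(↑S : Set ι) => y i)
  | 0, V₁, V₂, _, _, _, _, _, _, ι, _, x, y, E, n, hcard, hcond => by
    haveI : IsEmpty ↥((↑(∅ : Finset ι)) : Set ι) := by
      rw [Finset.coe_empty]; exact Set.isEmpty_coe_sort.mpr rfl
    have hE : E = ∅ := Finset.card_eq_zero.mp hcard
    subst hE
    have h0 := hcond ∅ (by simp)
    rw [Finset.sdiff_empty,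
      show span ℂ (x '' (↑(∅ : Finset ι) : Set ι)) = ⊥ by simp,
      show span ℂ (y '' (↑(∅ : Finset ι) : Set ι)) = ⊥ by simp,
      finrank_bot ℂ V₁, finrank_bot ℂ V₂] at h0
    have hn0 : n = 0 := by omega
    exact ⟨∅, by simp, by simp [hn0], linearIndependent_empty_type, linearIndependent_empty_type⟩
  | (m + 1), V₁, V₂, _, _, _, _, _, _, ι, _, x, y, E, n, hcard, hcond => by
    rcases Nat.eq_zero_or_pos n with hn | hn
    · subst hn
      haveI : IsEmpty ↥((↑(∅ : Finset ι)) : Set ι) := by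
        rw [Finset.coe_empty]; exact Set.isEmpty_coe_sort.mpr rfl
      exact ⟨∅, by simp, by simp, linearIndependent_empty_type, linearIndependent_empty_type⟩
    obtain ⟨e, he⟩ : ∃ e, e ∈ E := Finset.card_pos.mp (by omega)
    have hE'card : (E.erase e).card = m := by rw [Finset.card_erase_of_mem he, hcard]; omega
    by_cases hdel : ∀ A : Finset ι, A ⊆ E.erase e →
        n ≤ finrank ℂ ↥(span ℂ (x '' ↑A)) + finrank ℂ ↥(span ℂ (y '' ↑(E.erase e \ A)))
    · obtain ⟨S, hS1, hS2, hS3, hS4⟩ := edmonds m x y (E.erase e) n hE'card hdel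
      exact ⟨S, hS1.trans (Finset.erase_subset _ _), hS2, hS3, hS4⟩
    push_neg at hdel
    obtain ⟨A₀, hA₀E, hA₀⟩ := hdel
    have heA₀ : e ∉ A₀ := fun h => Finset.notMem_erase e E (hA₀E h)
    by_cases hxe : x e = 0
    · exfalso
      have hsub : insert e A₀ ⊆ E :=
        Finset.insert_subset he (hA₀E.trans (Finset.erase_subset _ _))
      have h1 := hcond (insert e A₀) hsub
      have e1 : x '' ↑(insert e A₀) = insert (x e) (x '' ↑A₀) := by
        rw [Finset.coe_insert, Set.image_insert_eq]
      have e2 : E \ insert e A₀ = E.erase e \ A₀ := by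
        ext i
        simp only [Finset.mem_sdiff, Finset.mem_insert, Finset.mem_erase, not_or]
        tauto
      rw [e1, hxe, Submodule.span_insert_zero, e2] at h1
      omega
    by_cases hye : y e = 0
    · exfalso
      have h1 := hcond A₀ (hA₀E.trans (Finset.erase_subset _ _))
      have e2 : E \ A₀ = insert e (E.erase e \ A₀) := by
        ext i
        simp only [Finset.mem_sdiff, Finset.mem_insert, Finset.mem_erase]
        constructor
        · rintro ⟨hiE, hiA⟩
          by_cases hie : i = e
          · exact Or.inl hie
          · exact Or.inr ⟨⟨hie, hiE⟩, hiA⟩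
        · rintro (rfl | ⟨⟨hne, hiE⟩, hiA⟩)
          · exact ⟨he, heA₀⟩
          · exact ⟨hiE, hiA⟩
      have e3 : y '' ↑(insert e (E.erase e \ A₀)) = insert (y e) (y '' ↑(E.erase e \ A₀)) := by
        rw [Finset.coe_insert, Set.image_insert_eq]
      rw [e2, e3, hye, Submodule.span_insert_zero] at h1
      omega
    -- contraction case
    have hquot1 : ∀ s : Set ι,
        finrank ℂ ↥(span ℂ ((fun i => (span ℂ {x e}).mkQ (x i)) '' s)) + 1
        = finrank ℂ ↥(span ℂ (x '' insert e s)) := by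
      intro s
      have him : (fun i => (span ℂ {x e}).mkQ (x i)) '' s = (span ℂ {x e}).mkQ '' (x '' s) := by
        rw [← Set.image_comp]; rfl
      rw [Set.image_insert_eq, him]
      exact finrank_span_quot (x e) hxe (x '' s)
    have hquot2 : ∀ s : Set ι,
        finrank ℂ ↥(span ℂ ((fun i => (span ℂ {y e}).mkQ (y i)) '' s)) + 1
        = finrank ℂ ↥(span ℂ (y '' insert e s)) := by
      intro s
      have him : (fun i => (span ℂ {y e}).mkQ (y i)) '' s = (span ℂ {y e}).mkQ '' (y '' s) := by
        rw [← Set.image_comp]; rfl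
      rw [Set.image_insert_eq, him]
      exact finrank_span_quot (y e) hye (y '' s)
    have hcontr : ∀ B : Finset ι, B ⊆ E.erase e →
        n - 1 ≤ finrank ℂ ↥(span ℂ ((fun i => (span ℂ {x e}).mkQ (x i)) '' ↑B))
          + finrank ℂ ↥(span ℂ ((fun i => (span ℂ {y e}).mkQ (y i)) '' ↑(E.erase e \ B))) := by
      intro B hB
      by_contra hlt
      push_neg at hlt
      have heB : e ∉ B := fun h => Finset.notMem_erase e E (hB h)
      -- submodularity for x
      have e2fin : A₀ ∩ insert e B = A₀ ∩ B := by
        ext i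
        simp only [Finset.mem_inter, Finset.mem_insert]
        constructor
        · rintro ⟨h1, rfl | h2⟩
          · exact absurd h1 heA₀
          · exact ⟨h1, h2⟩
        · tauto
      have sub1 := span_submod x (↑A₀) (↑(insert e B))
      rw [← Finset.coe_union, ← Finset.coe_inter, e2fin] at sub1
      -- submodularity for y
      have e3fin : E.erase e \ A₀ ∪ insert e (E.erase e \ B) = E \ (A₀ ∩ B) := by
        ext i
        simp only [Finset.mem_union, Finset.mem_sdiff, Finset.mem_insert, Finset.mem_inter,
          Finset.mem_erase]
        constructor
        · rintro (⟨⟨hne, hiE⟩, hA⟩ | rfl | ⟨⟨hne, hiE⟩, hB'⟩)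
          · exact ⟨hiE, fun h => hA h.1⟩
          · exact ⟨he, fun h => heA₀ h.1⟩
          · exact ⟨hiE, fun h => hB' h.2⟩
        · rintro ⟨hiE, hAB⟩
          by_cases hie : i = e
          · exact Or.inr (Or.inl hie)
          · by_cases hiA : i ∈ A₀
            · exact Or.inr (Or.inr ⟨⟨hie, hiE⟩, fun h => hAB ⟨hiA, h⟩⟩)
            · exact Or.inl ⟨⟨hie, hiE⟩, hiA⟩
      have e4fin : E.erase e \ A₀ ∩ insert e (E.erase e \ B) = E.erase e \ (A₀ ∪ B) := by
        ext i
        simp only [Finset.mem_inter, Finset.mem_sdiff, Finset.mem_insert, Finset.mem_union,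
          Finset.mem_erase]
        constructor
        · rintro ⟨⟨⟨hne, hiE⟩, hA⟩, rfl | ⟨_, hB'⟩⟩
          · exact absurd rfl hne
          · exact ⟨⟨hne, hiE⟩, fun h => h.elim hA hB'⟩
        · rintro ⟨⟨hne, hiE⟩, hAB⟩
          exact ⟨⟨⟨hne, hiE⟩, fun h => hAB (Or.inl h)⟩,
            Or.inr ⟨⟨hne, hiE⟩, fun h => hAB (Or.inr h)⟩⟩
      have sub2 := span_submod y (↑(E.erase e \ A₀)) (↑(insert e (E.erase e \ B)))
      rw [← Finset.coe_union, ← Finset.coe_inter, e3fin, e4fin] at sub2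
      -- main condition at the two sets
      have m1 := hcond (A₀ ∩ B) ((Finset.inter_subset_left).trans
        (hA₀E.trans (Finset.erase_subset _ _)))
      have m2 := hcond (A₀ ∪ insert e B) (Finset.union_subset
        (hA₀E.trans (Finset.erase_subset _ _))
        (Finset.insert_subset he (hB.trans (Finset.erase_subset _ _))))
      have e5 : E \ (A₀ ∪ insert e B) = E.erase e \ (A₀ ∪ B) := by
        ext i
        simp only [Finset.mem_sdiff, Finset.mem_union, Finset.mem_insert, Finset.mem_erase,
          not_or]
        tauto
      rw [e5] at m2
      -- quotient rank identities
      have q1 := hquot1 (↑B)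
      rw [show insert e (↑B : Set ι) = ↑(insert e B) from (Finset.coe_insert e B).symm] at q1
      have q2 := hquot2 (↑(E.erase e \ B))
      rw [show insert e (↑(E.erase e \ B) : Set ι) = ↑(insert e (E.erase e \ B)) from
        (Finset.coe_insert _ _).symm] at q2
      omega
    obtain ⟨S, hS1, hS2, hS3, hS4⟩ := edmonds m (fun i => (span ℂ {x e}).mkQ (x i))
      (fun i => (span ℂ {y e}).mkQ (y i)) (E.erase e) (n - 1) hE'card hcontr
    have heS : e ∉ S := fun h => Finset.notMem_erase e E (hS1 h)
    have heSc : e ∉ (↑S : Set ι) := by simpa using heS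
    refine ⟨insert e S, Finset.insert_subset he (hS1.trans (Finset.erase_subset _ _)), ?_, ?_, ?_⟩
    · rw [Finset.card_insert_of_notMem heS, hS2]; omega
    · have hcoe : ((↑(insert e S) : Set ι)) = insert e (↑S : Set ι) := Finset.coe_insert e S
      rw [hcoe]
      exact linearIndependent_insert_of_quot heSc hxe hS3
    · have hcoe : ((↑(insert e S) : Set ι)) = insert e (↑S : Set ι) := Finset.coe_insert e S
      rw [hcoe]
      exact linearIndependent_insert_of_quot heSc hye hS4

end Edmonds

section Key
open Submodule Module Set

lemma mul_vecMulVec {m' n' p' : Type*} [Fintype n'] (M : Matrix m' n' ℂ) (u : n' → ℂ)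
    (w : p' → ℂ) : M * vecMulVec u w = vecMulVec (M.mulVec u) w := by
  ext a b
  simp only [Matrix.mul_apply, vecMulVec_apply, Matrix.mulVec, dotProduct, Finset.sum_mul]
  exact Finset.sum_congr rfl fun c _ => by ring

lemma vecMulVec_mul {m' n' p' : Type*} [Fintype n'] (u : m' → ℂ) (w : n' → ℂ)
    (M : Matrix n' p' ℂ) : vecMulVec u w * M = vecMulVec u (Matrix.vecMul w M) := by
  ext a b
  simp only [Matrix.mul_apply, vecMulVec_apply, Matrix.vecMul, dotProduct, Finset.mul_sum]
  exact Finset.sum_congr rfl fun c _ => by ring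

lemma vecMulVec_zero_left {m' n' : Type*} (w : n' → ℂ) :
    vecMulVec (0 : m' → ℂ) w = 0 := by
  ext a b; simp [vecMulVec_apply]

lemma vecMulVec_mulVec {m' n' : Type*} [Fintype n'] (u : m' → ℂ) (w : n' → ℂ) (v : n' → ℂ) :
    (vecMulVec u w).mulVec v = (w ⬝ᵥ v) • u := by
  ext a
  simp only [Matrix.mulVec, dotProduct, vecMulVec_apply, Pi.smul_apply, smul_eq_mul,
    Finset.sum_mul, Finset.mul_sum]
  exact Finset.sum_congr rfl fun c _ => by ring

lemma sum_mulVec' {m' n' ι : Type*} [Fintype n'] (s : Finset ι) (M : ι → Matrix m' n' ℂ)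
    (v : n' → ℂ) : (∑ i ∈ s, M i).mulVec v = ∑ i ∈ s, (M i).mulVec v := by
  ext a
  simp only [Matrix.mulVec, dotProduct, Matrix.sum_apply, Finset.sum_apply, Finset.sum_mul]
  rw [Finset.sum_comm]

lemma key {N K : ℕ} (x y : Fin K → Fin N → ℂ)
    (hrank : ∀ Z : Matrix (Fin N) (Fin N) ℂ, Z.PosSemidef →
      Z.rank ≤ (∑ i : Fin K,
        vecMulVec (x i) (star (y i)) * Z * vecMulVec (y i) (star (x i))).rank)
    (A : Finset (Fin K)) :
    N ≤ finrank ℂ ↥(span ℂ (x '' ↑A)) + finrank ℂ ↥(span ℂ (y '' ↑(Finset.univ \ A))) := by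
  classical
  set W : Submodule ℂ (EuclideanSpace ℂ (Fin N)) := (span ℂ (y '' ↑(Finset.univ \ A))).map
    (WithLp.linearEquiv 2 ℂ (Fin N → ℂ)).symm.toLinearMap with hW
  set m := finrank ℂ ↥Wᗮ with hm
  set b := stdOrthonormalBasis ℂ ↥Wᗮ with hb
  set C : Matrix (Fin m) (Fin N) ℂ :=
    Matrix.of (fun k n => star (((b k : EuclideanSpace ℂ (Fin N))) n)) with hC
  have hCmul : ∀ v : Fin N → ℂ, ∀ k, C.mulVec v k
      = inner ℂ ((b k : EuclideanSpace ℂ (Fin N))) (WithLp.toLp 2 v) := by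
    intro v k
    simp only [Matrix.mulVec, dotProduct, hC, Matrix.of_apply, PiLp.inner_apply,
      RCLike.inner_apply]
    exact Finset.sum_congr rfl fun _ _ => mul_comm _ _
  have hCC : C * Cᴴ = 1 := by
    ext k l
    rw [Matrix.mul_apply, Matrix.one_apply]
    have horth := orthonormal_iff_ite.mp b.orthonormal k l
    rw [Submodule.coe_inner] at horth
    rw [← horth, PiLp.inner_apply]
    simp only [conjTranspose_apply, hC, Matrix.of_apply, RCLike.inner_apply, star_star]
    simp only [starRingEnd_apply]
    exact Finset.sum_congr rfl fun _ _ => mul_comm _ _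
  have hrkC : C.rank = m := by
    refine le_antisymm (C.rank_le_card_height.trans (by simp)) ?_
    have h1 := Matrix.rank_mul_le_left C Cᴴ
    rw [hCC, Matrix.rank_one] at h1
    simpa using h1
  set Z := Cᴴ * C with hZ
  have hZpsd : Z.PosSemidef := Matrix.posSemidef_conjTranspose_mul_self C
  have hrkZ : Z.rank = m := by rw [hZ, Matrix.rank_conjTranspose_mul_self, hrkC]
  have hWrank : finrank ℂ ↥W + m = N := by
    rw [hm]
    rw [Submodule.finrank_add_finrank_orthogonal W, finrank_euclideanSpace_fin]
  -- C kills W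
  have hCW : ∀ v : Fin N → ℂ, WithLp.toLp 2 v ∈ W → C.mulVec v = 0 := by
    intro v hv
    funext k
    rw [hCmul v k]
    exact Submodule.inner_left_of_mem_orthogonal hv (SetLike.coe_mem (b k))
  -- terms with i ∉ A vanish
  have hterm0 : ∀ i ∉ A, vecMulVec (x i) (star (y i)) * Z * vecMulVec (y i) (star (x i)) = 0 := by
    intro i hi
    have hyW : WithLp.toLp 2 (y i) ∈ W := by
      rw [hW]
      exact ⟨y i, subset_span ⟨i, by simp [hi], rfl⟩, rfl⟩
    have h0 : C.mulVec (y i) = 0 := hCW _ hyW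
    rw [Matrix.mul_assoc, hZ, Matrix.mul_assoc, _root_.mul_vecMulVec, h0, vecMulVec_zero_left,
      Matrix.mul_zero, Matrix.mul_zero]
  -- rank bound
  have hrange : ∀ v : Fin N → ℂ,
      (∑ i : Fin K, vecMulVec (x i) (star (y i)) * Z * vecMulVec (y i) (star (x i))).mulVec v
        ∈ span ℂ (x '' ↑A) := by
    intro v
    rw [sum_mulVec']
    refine Submodule.sum_mem _ fun i _ => ?_
    by_cases hi : i ∈ A
    · rw [_root_.vecMulVec_mul, _root_.vecMulVec_mul, _root_.vecMulVec_mulVec]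
      exact Submodule.smul_mem _ _ (subset_span ⟨i, by simp [hi], rfl⟩)
    · rw [hterm0 i hi]
      simp only [Matrix.zero_mulVec]
      exact Submodule.zero_mem _
  have hrankT : (∑ i : Fin K,
      vecMulVec (x i) (star (y i)) * Z * vecMulVec (y i) (star (x i))).rank
        ≤ finrank ℂ ↥(span ℂ (x '' ↑A)) := by
    apply Submodule.finrank_mono
    rintro - ⟨v, rfl⟩
    rw [Matrix.mulVecLin_apply]
    exact hrange v
  have hfinal := hrank Z hZpsd
  rw [hrkZ] at hfinal
  have hgoal : N ≤ finrank ℂ ↥(span ℂ (x '' ↑A)) + finrank ℂ ↥W := by omega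
  rwa [hW, LinearEquiv.finrank_map_eq] at hgoal

end Key

theorem rank_nondecreasing_implies_matroid_intersection_full_rank {N K : ℕ}
    (x y : Fin K → Fin N → ℂ) (hx : ∀ i, x i ≠ 0) (hy : ∀ i, y i ≠ 0)
    (hrank : ∀ Z : Matrix (Fin N) (Fin N) ℂ, Z.PosSemidef →
      Z.rank ≤ (∑ i : Fin K,
        vecMulVec (x i) (star (y i)) * Z * vecMulVec (y i) (star (x i))).rank) :
    ∃ f : Fin N → Fin K, StrictMono f ∧
      LinearIndependent ℂ (fun k => x (f k)) ∧ LinearIndependent ℂ (fun k => y (f k)) := by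
  classical
  obtain ⟨S, hSsub, hScard, hSx, hSy⟩ := edmonds K x y Finset.univ N (by simp)
    (fun A _ => key x y hrank A)
  set g : Fin N → ↥((↑S : Set (Fin K))) := fun k =>
    ⟨(S.orderIsoOfFin hScard k : Fin K), by simp [Finset.coe_mem]⟩ with hg
  have hginj : Function.Injective g := by
    intro a b hab
    apply (S.orderIsoOfFin hScard).injective
    exact Subtype.ext (congrArg Subtype.val hab)
  refine ⟨fun k => ↑(S.orderIsoOfFin hScard k), ?_, ?_, ?_⟩
  · exact fun a b hab => (S.orderIsoOfFin hScard).strictMono hab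
  · exact hSx.comp g hginj
  · exact hSy.comp g hginj
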